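/- Let X and Y be compact metrizable spaces, p, q ∈ X distinct points, z, w ∈ Y, and α, β ∈ (0,1). Let φ : C(X) → C(Y) be a unital positive linear map sending C(X)_{(p,q,α)} into C(Y)_{(z,w,β)}, and let μ_z, μ_w be the Borel probability measures on X representing f ↦ φ(f)(z) and f ↦ φ(f)(w). Let {X₁,…,Xₙ} be a partition of X into connected Borel sets with p ∈ X₁ and q ∈ Xₙ. Then μ_z(Xᵢ) = β μ_w(Xᵢ) for i = 2,…,n−1, and α μ_z(X₁) + μ_z(Xₙ) = β (α μ_w(X₁) + μ_w(Xₙ)). -/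

import Mathlib

open ContinuousMap MeasureTheory
open scoped ENNReal NNReal

theorem stmt16 (X Y : Type*) [MetricSpace X] [CompactSpace X]
    [MeasurableSpace X] [BorelSpace X]
    [MetricSpace Y] [CompactSpace Y]
    (p q : X) (hpq : p ≠ q) (z w : Y)
    (α β : ℝ) (hα : α ∈ Set.Ioo (0 : ℝ) 1) (hβ : β ∈ Set.Ioo (0 : ℝ) 1)
    (φ : C(X, ℝ) →ₗ[ℝ] C(Y, ℝ))
    (hunital : φ 1 = 1)
    (hpos : ∀ f : C(X, ℝ), (∀ x, 0 ≤ f x) → ∀ y, 0 ≤ φ f y)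
    (hsub : ∀ f : C(X, ℝ), f p = α * f q → φ f z = β * φ f w)
    (μz μw : Measure X)
    [IsProbabilityMeasure μz] [IsProbabilityMeasure μw]
    (hμz : ∀ f : C(X, ℝ), φ f z = ∫ t, f t ∂μz)
    (hμw : ∀ f : C(X, ℝ), φ f w = ∫ t, f t ∂μw)
    (n : ℕ) (hn : 2 ≤ n) (P : Fin n → Set X)
    (hmeas : ∀ i, MeasurableSet (P i))
    (hconn : ∀ i, IsConnected (P i))
    (hdisj : Pairwise (Function.onFun Disjoint P))
    (hcover : ⋃ i, P i = Set.univ)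
    (hp : p ∈ P ⟨0, by omega⟩) (hq : q ∈ P ⟨n - 1, by omega⟩) :
    (∀ i : Fin n, 1 ≤ i.val → i.val ≤ n - 2 →
      (μz (P i)).toReal = β * (μw (P i)).toReal) ∧
    α * (μz (P ⟨0, by omega⟩)).toReal + (μz (P ⟨n - 1, by omega⟩)).toReal =
      β * (α * (μw (P ⟨0, by omega⟩)).toReal + (μw (P ⟨n - 1, by omega⟩)).toReal) := by
  obtain ⟨hα0, hα1⟩ := hα
  obtain ⟨hβ0, hβ1⟩ := hβ
  set c : ℝ := (1 - β) / (1 - α) with hc_def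
  have hα1' : (0:ℝ) < 1 - α := by linarith
  have hc0 : 0 ≤ c := by rw [hc_def]; exact div_nonneg (by linarith) (by linarith)
  have hcα0 : 0 ≤ c * α := mul_nonneg hc0 hα0.le
  -- Key integral identity
  have key : ∀ f : C(X, ℝ),
      ∫ t, f t ∂μz + (c * α) * f q = β * ∫ t, f t ∂μw + c * f p := by
    intro f
    set d : ℝ := (f p - α * f q) / (1 - α) with hd_def
    have hd : f p - α * f q = d * (1 - α) := by
      rw [hd_def, div_mul_cancel₀ _ hα1'.ne']
    have hg : (f - d • (1 : C(X, ℝ))) p = α * (f - d • (1 : C(X, ℝ))) q := by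
      simp only [ContinuousMap.sub_apply, ContinuousMap.smul_apply,
        ContinuousMap.one_apply, smul_eq_mul, mul_one]
      linarith [hd]
    have h1 := hsub _ hg
    have h2 : φ (f - d • (1 : C(X, ℝ))) = φ f - d • (1 : C(Y, ℝ)) := by
      rw [map_sub, LinearMap.map_smul, hunital]
    rw [h2] at h1
    simp only [ContinuousMap.sub_apply, ContinuousMap.smul_apply,
      ContinuousMap.one_apply, smul_eq_mul, mul_one] at h1
    rw [hμz f, hμw f] at h1
    have hcα : c * (1 - α) = 1 - β := by
      rw [hc_def, div_mul_cancel₀ _ hα1'.ne']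
    -- h1 : ∫ f ∂μz - d = β * (∫ f ∂μw - d)
    have : ∫ t, f t ∂μz - β * ∫ t, f t ∂μw = (1 - β) * d := by linarith [h1]
    have h3 : c * f p - c * α * f q = (1 - β) * d := by
      rw [show c * f p - c * α * f q = c * (f p - α * f q) by ring, hd, ← hcα]; ring
    linarith [this, h3]
  -- Two finite measures
  set ν1 : Measure X := μz + (ENNReal.ofReal (c * α)) • Measure.dirac q with hν1_def
  set ν2 : Measure X := (ENNReal.ofReal β) • μw + (ENNReal.ofReal c) • Measure.dirac p
    with hν2_def
  haveI : IsFiniteMeasure ν1 := by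
    constructor
    rw [hν1_def]
    simp only [Measure.add_apply, Measure.smul_apply, smul_eq_mul]
    exact ENNReal.add_lt_top.mpr ⟨measure_lt_top _ _,
      ENNReal.mul_lt_top ENNReal.ofReal_lt_top (measure_lt_top _ _)⟩
  have hint : ∀ (μ : Measure X) [IsFiniteMeasure μ] (g : C(X, ℝ)), Integrable g μ :=
    fun μ _ g => g.continuous.integrable_of_hasCompactSupport
      (HasCompactSupport.of_compactSpace _)
  have hνeq : ν1 = ν2 := by
    apply ext_of_forall_lintegral_eq_of_IsFiniteMeasure
    intro f
    set g : C(X, ℝ) := ContinuousMap.mk (fun x => ((f x : ℝ)))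
      (NNReal.continuous_coe.comp f.continuous) with hg_def
    have hgnn : ∀ x, 0 ≤ g x := fun x => NNReal.coe_nonneg _
    have hlz : ∫⁻ x, f x ∂μz = ENNReal.ofReal (∫ x, g x ∂μz) :=
      lintegral_coe_eq_integral (fun x => f x) (hint μz g)
    have hlw : ∫⁻ x, f x ∂μw = ENNReal.ofReal (∫ x, g x ∂μw) :=
      lintegral_coe_eq_integral (fun x => f x) (hint μw g)
    have hnni : 0 ≤ ∫ x, g x ∂μz := integral_nonneg hgnn
    have hnnw : 0 ≤ ∫ x, g x ∂μw := integral_nonneg hgnn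
    rw [hν1_def, hν2_def]
    rw [lintegral_add_measure, lintegral_smul_measure, lintegral_add_measure,
      lintegral_smul_measure, lintegral_smul_measure, lintegral_dirac, lintegral_dirac,
      hlz, hlw]
    have e1 : (f q : ℝ≥0∞) = ENNReal.ofReal (g q) := ENNReal.ofReal_coe_nnreal.symm
    have e2 : (f p : ℝ≥0∞) = ENNReal.ofReal (g p) := ENNReal.ofReal_coe_nnreal.symm
    simp only [smul_eq_mul]
    rw [e1, e2, ← ENNReal.ofReal_mul hcα0, ← ENNReal.ofReal_mul hβ0.le,
      ← ENNReal.ofReal_mul hc0, ← ENNReal.ofReal_add hnni (mul_nonneg hcα0 (hgnn q)),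
      ← ENNReal.ofReal_add (mul_nonneg hβ0.le hnnw) (mul_nonneg hc0 (hgnn p))]
    exact congrArg ENNReal.ofReal (key g)
  -- Evaluate the measure identity on a measurable set
  have hset : ∀ S : Set X, MeasurableSet S →
      μz S + ENNReal.ofReal (c * α) * (Measure.dirac q) S
        = ENNReal.ofReal β * μw S + ENNReal.ofReal c * (Measure.dirac p) S := by
    intro S hS
    have := congrArg (fun μ : Measure X => μ S) hνeq
    simpa [hν1_def, hν2_def, Measure.add_apply, Measure.smul_apply, smul_eq_mul] using this
  have h0ne : (⟨0, by omega⟩ : Fin n) ≠ ⟨n - 1, by omega⟩ := by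
    simp only [ne_eq, Fin.mk.injEq]
    omega
  have hq0 : q ∉ P ⟨0, by omega⟩ := fun hmem =>
    (Set.disjoint_left.mp (hdisj h0ne.symm) hq) hmem
  have hpn : p ∉ P ⟨n - 1, by omega⟩ := fun hmem =>
    (Set.disjoint_left.mp (hdisj h0ne) hp) hmem
  have toRealβ : ∀ S : Set X, (ENNReal.ofReal β * μw S).toReal = β * (μw S).toReal := by
    intro S
    rw [ENNReal.toReal_mul, ENNReal.toReal_ofReal hβ0.le]
  constructor
  · intro i h1 h2
    have hne0 : i ≠ ⟨0, by omega⟩ := by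
      intro h; rw [h] at h1; simp at h1
    have hnen : i ≠ ⟨n - 1, by omega⟩ := by
      intro h
      have : i.val = n - 1 := by rw [h]
      omega
    have hpi : p ∉ P i := fun hmem =>
      (Set.disjoint_left.mp (hdisj hne0) hmem) hp
    have hqi : q ∉ P i := fun hmem =>
      (Set.disjoint_left.mp (hdisj hnen) hmem) hq
    have := hset (P i) (hmeas i)
    rw [Measure.dirac_apply' _ (hmeas i), Measure.dirac_apply' _ (hmeas i),
      Set.indicator_of_notMem hqi, Set.indicator_of_notMem hpi] at this
    simp only [mul_zero, add_zero] at this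
    rw [this, toRealβ]
  · have h0 := hset (P ⟨0, by omega⟩) (hmeas _)
    rw [Measure.dirac_apply' _ (hmeas _), Measure.dirac_apply' _ (hmeas _),
      Set.indicator_of_notMem hq0, Set.indicator_of_mem hp] at h0
    simp only [mul_zero, add_zero, Pi.one_apply, mul_one] at h0
    have hN := hset (P ⟨n - 1, by omega⟩) (hmeas _)
    rw [Measure.dirac_apply' _ (hmeas _), Measure.dirac_apply' _ (hmeas _),
      Set.indicator_of_mem hq, Set.indicator_of_notMem hpn] at hN
    simp only [mul_zero, add_zero, Pi.one_apply, mul_one] at hN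
    have h0' : (μz (P ⟨0, by omega⟩)).toReal
        = β * (μw (P ⟨0, by omega⟩)).toReal + c := by
      have := congrArg ENNReal.toReal h0
      rwa [ENNReal.toReal_add (ENNReal.mul_ne_top ENNReal.ofReal_ne_top
        (measure_ne_top _ _)) ENNReal.ofReal_ne_top,
        toRealβ, ENNReal.toReal_ofReal hc0] at this
    have hN' : (μz (P ⟨n - 1, by omega⟩)).toReal + c * α
        = β * (μw (P ⟨n - 1, by omega⟩)).toReal := by
      have := congrArg ENNReal.toReal hN
      rwa [ENNReal.toReal_add (measure_ne_top _ _) ENNReal.ofReal_ne_top,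
        ENNReal.toReal_ofReal hcα0, toRealβ] at this
    rw [h0']; nlinarith [hN']
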